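/- arXiv:2508.15567 — 2 statements merged into one kernel-verified Lean document; each statement's English description precedes it below -/
import Mathlib

section
/- Let y₁, y₂, y₃ ∈ ℝⁿ, set y = y₁ + y₂, ŷ = H y, ŷ* = H₁ y₁ + H₂ y₂, ŷ₃ = H₃ y₃, and define R := (y₃ − ŷ₃)ᵀ((y − ŷ) − (y − ŷ*)). If R ≤ 0, then ‖(y + y₃) − (ŷ + ŷ₃)‖² ≤ ‖(y + y₃) − (ŷ* + ŷ₃)‖². -/
open Matrix MeasureTheory ProbabilityTheory
open scoped BigOperators

/-- The hat matrix `H_A = A (AᵀA)⁻¹ Aᵀ` of a design matrix `A`. -/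
noncomputable def hatMat {n : ℕ} {q : Type*} [Fintype q] [DecidableEq q]
    (A : Matrix (Fin n) q ℝ) : Matrix (Fin n) (Fin n) ℝ :=
  A * (Aᵀ * A)⁻¹ * Aᵀ

lemma hatMat_def {n : ℕ} {q : Type*} [Fintype q] [DecidableEq q]
    (A : Matrix (Fin n) q ℝ) : hatMat A = A * (Aᵀ * A)⁻¹ * Aᵀ := rfl

lemma hatMat_mul {n : ℕ} {q : Type*} [Fintype q] [DecidableEq q]
    (A : Matrix (Fin n) q ℝ) (h : IsUnit (Aᵀ * A)) : hatMat A * A = A := by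
  have hd : IsUnit (Aᵀ * A).det := (Matrix.isUnit_iff_isUnit_det _).mp h
  unfold hatMat
  rw [Matrix.mul_assoc, Matrix.mul_assoc, Matrix.nonsing_inv_mul _ hd, Matrix.mul_one]

lemma hatMat_symm {n : ℕ} {q : Type*} [Fintype q] [DecidableEq q]
    (A : Matrix (Fin n) q ℝ) : (hatMat A)ᵀ = hatMat A := by
  unfold hatMat
  rw [Matrix.transpose_mul, Matrix.transpose_mul, Matrix.transpose_transpose,
    Matrix.transpose_nonsing_inv, Matrix.transpose_mul, Matrix.transpose_transpose,
    ← Matrix.mul_assoc]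

lemma hatMat_idem {n : ℕ} {q : Type*} [Fintype q] [DecidableEq q]
    (A : Matrix (Fin n) q ℝ) (h : IsUnit (Aᵀ * A)) : hatMat A * hatMat A = hatMat A := by
  nth_rewrite 2 [hatMat_def]
  rw [← Matrix.mul_assoc, ← Matrix.mul_assoc, hatMat_mul A h, ← hatMat_def]

/-- **Lemma 1.** If `R := (y₃ − ŷ₃)ᵀ((y − ŷ) − (y − ŷ*)) ≤ 0`, then
`‖(y + y₃) − (ŷ + ŷ₃)‖² ≤ ‖(y + y₃) − (ŷ* + ŷ₃)‖²`. -/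
theorem avr_three_models_training_error {n p : ℕ}
    (X₁ X₂ X₃ : Matrix (Fin n) (Fin p) ℝ)
    (h₁ : IsUnit (X₁ᵀ * X₁)) (h₂ : IsUnit (X₂ᵀ * X₂)) (h₃ : IsUnit (X₃ᵀ * X₃))
    (hX : IsUnit ((fromCols X₁ X₂)ᵀ * fromCols X₁ X₂))
    (y₁ y₂ y₃ : Fin n → ℝ) :
    let y := y₁ + y₂
    let H := hatMat (fromCols X₁ X₂)
    let H₁ := hatMat X₁
    let H₂ := hatMat X₂
    let H₃ := hatMat X₃
    let yhat := H.mulVec y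
    let yhatStar := H₁.mulVec y₁ + H₂.mulVec y₂
    let yhat₃ := H₃.mulVec y₃
    let R := (y₃ - yhat₃) ⬝ᵥ ((y - yhat) - (y - yhatStar))
    R ≤ 0 →
      ((y + y₃) - (yhat + yhat₃)) ⬝ᵥ ((y + y₃) - (yhat + yhat₃)) ≤
        ((y + y₃) - (yhatStar + yhat₃)) ⬝ᵥ ((y + y₃) - (yhatStar + yhat₃)) := by
  intro y H H₁ H₂ H₃ yhat yhatStar yhat₃ R hR
  set X := fromCols X₁ X₂ with hXdef
  -- H fixes columns of X₁ and X₂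
  have hHX : H * X = X := hatMat_mul X hX
  have hHX₁ : H * X₁ = X₁ := by
    have := hHX
    rw [hXdef, Matrix.mul_fromCols] at this
    have h' := congrArg (fun M => M.toCols₁) this
    simpa using h'
  have hHX₂ : H * X₂ = X₂ := by
    have := hHX
    rw [hXdef, Matrix.mul_fromCols] at this
    have h' := congrArg (fun M => M.toCols₂) this
    simpa using h'
  -- H fixes yhatStar
  have hfix : H *ᵥ yhatStar = yhatStar := by
    show H *ᵥ (H₁ *ᵥ y₁ + H₂ *ᵥ y₂) = H₁ *ᵥ y₁ + H₂ *ᵥ y₂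
    have e1 : H *ᵥ (H₁ *ᵥ y₁) = H₁ *ᵥ y₁ := by
      rw [Matrix.mulVec_mulVec]
      show (H * hatMat X₁) *ᵥ y₁ = _
      rw [hatMat_def X₁, ← Matrix.mul_assoc, ← Matrix.mul_assoc, hHX₁, ← hatMat_def]
    have e2 : H *ᵥ (H₂ *ᵥ y₂) = H₂ *ᵥ y₂ := by
      rw [Matrix.mulVec_mulVec]
      show (H * hatMat X₂) *ᵥ y₂ = _
      rw [hatMat_def X₂, ← Matrix.mul_assoc, ← Matrix.mul_assoc, hHX₂, ← hatMat_def]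
    rw [Matrix.mulVec_add, e1, e2]
  -- residual vectors
  set e := y - yhat with he
  set es := y - yhatStar with hes
  set r := y₃ - yhat₃ with hr
  set d := yhat - yhatStar with hd
  have hdsplit : es = e + d := by rw [he, hd, hes]; abel
  -- H *ᵥ e = 0
  have hHe : H *ᵥ e = 0 := by
    rw [he, Matrix.mulVec_sub]
    show H *ᵥ y - H *ᵥ (H *ᵥ y) = 0
    rw [Matrix.mulVec_mulVec, hatMat_idem X hX]
    exact sub_self _
  -- H fixes d
  have hHd : H *ᵥ d = d := by
    rw [hd, Matrix.mulVec_sub]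
    show H *ᵥ (H *ᵥ y) - H *ᵥ yhatStar = _
    rw [Matrix.mulVec_mulVec, hatMat_idem X hX, hfix]
  -- orthogonality: e ⬝ᵥ d = 0
  have horth : e ⬝ᵥ d = 0 := by
    calc e ⬝ᵥ d = e ⬝ᵥ (H *ᵥ d) := by rw [hHd]
      _ = (Hᵀ *ᵥ e) ⬝ᵥ d := by rw [Matrix.dotProduct_mulVec, Matrix.mulVec_transpose]
      _ = (H *ᵥ e) ⬝ᵥ d := by rw [hatMat_symm]
      _ = 0 := by rw [hHe]; simp
  have hdd : 0 ≤ d ⬝ᵥ d := Finset.sum_nonneg fun i _ => mul_self_nonneg _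
  have hrd : 0 ≤ r ⬝ᵥ d := by
    have hdiff : (y - yhat) - (y - yhatStar) = -d := by rw [hd]; abel
    have : R = -(r ⬝ᵥ d) := by
      show (y₃ - yhat₃) ⬝ᵥ ((y - yhat) - (y - yhatStar)) = -(r ⬝ᵥ d)
      rw [hdiff, dotProduct_neg, hr]
    linarith [hR, this ▸ hR]
  have hg1 : (y + y₃) - (yhat + yhat₃) = e + r := by rw [he, hr]; abel
  have hg2 : (y + y₃) - (yhatStar + yhat₃) = es + r := by rw [hes, hr]; abel
  rw [hg1, hg2, hdsplit]
  have expand : ∀ u v : Fin n → ℝ, (u + v) ⬝ᵥ (u + v) = u ⬝ᵥ u + 2 * (u ⬝ᵥ v) + v ⬝ᵥ v := by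
    intro u v
    rw [add_dotProduct, dotProduct_add, dotProduct_add,
      dotProduct_comm v u]
    ring
  rw [expand e r, expand (e + d) r, expand e d]
  have hed_r : (e + d) ⬝ᵥ r = e ⬝ᵥ r + d ⬝ᵥ r := by rw [add_dotProduct]
  have hdr : d ⬝ᵥ r = r ⬝ᵥ d := dotProduct_comm d r
  linarith [horth, hdd, hrd, hed_r, hdr]
end

section
/- For m = 1, 2, 3 let β_m, θ_m ∈ ℝᵖ and W_m be deterministic real n×p matrices, and let ε₁, ε₂, ε₃ : Ω → ℝⁿ be square-integrable random vectors with E[ε_m] = 0 and E[ε_m ε_{m'}ᵀ] = Σ_{mm'} for m, m' ∈ {1,2,3}. Set y_m = X_m β_m + W_m θ_m + ε_m, y = y₁ + y₂, ŷ = H y, ŷ* = H₁ y₁ + H₂ y₂, ŷ₃ = H₃ y₃, and R := (y₃ − ŷ₃)ᵀ(ŷ* − ŷ). Then E[R] = Tr{(I − H₃)(H₁ − H)Σ₁₃} + Tr{(I − H₃)(H₂ − H)Σ₂₃} + (W₃θ₃)ᵀ(I − H₃)(H₁ − H)(W₁θ₁) + (W₃θ₃)ᵀ(I − H₃)(H₂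 − H)(W₂θ₂). -/
open Matrix MeasureTheory ProbabilityTheory
open scoped BigOperators

section aux

variable {n : ℕ} {Ω : Type*} [MeasurableSpace Ω] {P : Measure Ω} [IsProbabilityMeasure P]

lemma mulL2 {f g : Ω → ℝ} (hf : MemLp f 2 P) (hg : MemLp g 2 P) :
    Integrable (fun ω => f ω * g ω) P := by
  have : MemLp (f • g) 1 P := hg.smul hf (hpqr := ⟨by
    rw [inv_one, ENNReal.inv_two_add_inv_two]⟩)
  exact this.integrable le_rfl

lemma hat_mul_self {q : Type*} [Fintype q] [DecidableEq q]
    (A : Matrix (Fin n) q ℝ) (h : IsUnit (Aᵀ * A)) : hatMat A * A = A := by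
  have h' : IsUnit (Aᵀ * A).det := (Matrix.isUnit_iff_isUnit_det _).mp h
  rw [hatMat, Matrix.mul_assoc, Matrix.mul_assoc, Matrix.nonsing_inv_mul _ h', Matrix.mul_one]

lemma hat_transpose {q : Type*} [Fintype q] [DecidableEq q]
    (A : Matrix (Fin n) q ℝ) : (hatMat A)ᵀ = hatMat A := by
  have h1 : ((Aᵀ * A)⁻¹)ᵀ = (Aᵀ * A)⁻¹ := by
    rw [Matrix.transpose_nonsing_inv, Matrix.transpose_mul, Matrix.transpose_transpose]
  rw [hatMat, Matrix.transpose_mul, Matrix.transpose_mul, Matrix.transpose_transpose, h1,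
    ← Matrix.mul_assoc]

/-- Key expectation computation for affine functions of mean-zero L² vectors. -/
lemma key (A B : Matrix (Fin n) (Fin n) ℝ) (u v : Fin n → ℝ)
    (e f : Ω → Fin n → ℝ) (S : Matrix (Fin n) (Fin n) ℝ)
    (he : ∀ i, MemLp (fun ω => e ω i) 2 P) (hf : ∀ i, MemLp (fun ω => f ω i) 2 P)
    (hme : ∀ i, ∫ ω, e ω i ∂P = 0) (hmf : ∀ i, ∫ ω, f ω i ∂P = 0)
    (hS : ∀ i j, ∫ ω, e ω i * f ω j ∂P = S i j) :
    Integrable (fun ω => (u + A.mulVec (e ω)) ⬝ᵥ (v + B.mulVec (f ω))) P ∧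
    ∫ ω, (u + A.mulVec (e ω)) ⬝ᵥ (v + B.mulVec (f ω)) ∂P
      = u ⬝ᵥ v + Matrix.trace (Aᵀ * B * Sᵀ) := by
  set g : Fin n → Ω → ℝ := fun i ω => u i + ∑ j, A i j * e ω j with hg_def
  set h : Fin n → Ω → ℝ := fun i ω => v i + ∑ k, B i k * f ω k with hh_def
  have hg : ∀ i, MemLp (g i) 2 P := fun i =>
    (memLp_const (u i)).add (memLp_finsetSum _ fun j _ => (he j).const_mul (A i j))
  have hh : ∀ i, MemLp (h i) 2 P := fun i =>
    (memLp_const (v i)).add (memLp_finsetSum _ fun k _ => (hf k).const_mul (B i k))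
  have hpt : ∀ ω, (u + A.mulVec (e ω)) ⬝ᵥ (v + B.mulVec (f ω)) = ∑ i, g i ω * h i ω := by
    intro ω
    simp [dotProduct, Matrix.mulVec, hg_def, hh_def]
  have hint : ∀ i, Integrable (fun ω => g i ω * h i ω) P := fun i => mulL2 (hg i) (hh i)
  have hIntegrable : Integrable (fun ω => (u + A.mulVec (e ω)) ⬝ᵥ (v + B.mulVec (f ω))) P := by
    have := integrable_finset_sum (μ := P) Finset.univ (fun i _ => hint i)
    exact this.congr (Filter.Eventually.of_forall fun ω => (hpt ω).symm)
  refine ⟨hIntegrable, ?_⟩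
  have hexp : ∀ i ω, g i ω * h i ω
      = (u i * v i + ∑ k, (u i * B i k) * f ω k) + ((∑ j, (v i * A i j) * e ω j)
        + ∑ j, ∑ k, (A i j * B i k) * (e ω j * f ω k)) := by
    intro i ω
    have e1 : u i * (∑ k, B i k * f ω k) = ∑ k, (u i * B i k) * f ω k := by
      rw [Finset.mul_sum]; exact Finset.sum_congr rfl fun k _ => by ring
    have e2 : (∑ j, A i j * e ω j) * v i = ∑ j, (v i * A i j) * e ω j := by
      rw [Finset.sum_mul]; exact Finset.sum_congr rfl fun j _ => by ring
    have e3 : (∑ j, A i j * e ω j) * (∑ k, B i k * f ω k)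
        = ∑ j, ∑ k, (A i j * B i k) * (e ω j * f ω k) := by
      rw [Finset.sum_mul]
      refine Finset.sum_congr rfl fun j _ => ?_
      rw [Finset.mul_sum]; exact Finset.sum_congr rfl fun k _ => by ring
    simp only [hg_def, hh_def]
    rw [add_mul, mul_add, mul_add, e1, e2, e3]
  have hterm : ∀ i, ∫ ω, g i ω * h i ω ∂P
      = u i * v i + ∑ j, ∑ k, (A i j * B i k) * S j k := by
    intro i
    have is1 : Integrable (fun ω => ∑ k, (u i * B i k) * f ω k) P :=
      integrable_finset_sum _ fun k _ => ((hf k).integrable one_le_two).const_mul _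
    have i1 : Integrable (fun ω => u i * v i + ∑ k, (u i * B i k) * f ω k) P :=
      (integrable_const _).add is1
    have i2 : Integrable (fun ω => ∑ j, (v i * A i j) * e ω j) P :=
      integrable_finset_sum _ fun j _ => ((he j).integrable one_le_two).const_mul _
    have i3 : Integrable (fun ω => ∑ j, ∑ k, (A i j * B i k) * (e ω j * f ω k)) P :=
      integrable_finset_sum _ fun j _ => integrable_finset_sum _ fun k _ =>
        (mulL2 (he j) (hf k)).const_mul _
    have e4 : ∫ ω, (u i * v i + ∑ k, (u i * B i k) * f ω k) ∂P = u i * v i := by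
      rw [integral_add (integrable_const _) is1,
        integral_finset_sum _ fun k _ => ((hf k).integrable one_le_two).const_mul _]
      simp [integral_const_mul, hmf]
    have e5 : ∫ ω, (∑ j, (v i * A i j) * e ω j) ∂P = 0 := by
      rw [integral_finset_sum _ fun j _ => ((he j).integrable one_le_two).const_mul _]
      simp [integral_const_mul, hme]
    have e6 : ∫ ω, (∑ j, ∑ k, (A i j * B i k) * (e ω j * f ω k)) ∂P
        = ∑ j, ∑ k, (A i j * B i k) * S j k := by
      rw [integral_finset_sum _ fun j _ => (integrable_finset_sum _ fun k _ =>
        (mulL2 (he j) (hf k)).const_mul _)]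
      refine Finset.sum_congr rfl fun j _ => ?_
      rw [integral_finset_sum _ fun k _ => (mulL2 (he j) (hf k)).const_mul _]
      exact Finset.sum_congr rfl fun k _ => by rw [integral_const_mul, hS]
    calc ∫ ω, g i ω * h i ω ∂P
        = ∫ ω, ((u i * v i + ∑ k, (u i * B i k) * f ω k) + ((∑ j, (v i * A i j) * e ω j)
            + ∑ j, ∑ k, (A i j * B i k) * (e ω j * f ω k))) ∂P :=
          integral_congr_ae (Filter.Eventually.of_forall fun ω => hexp i ω)
      _ = (∫ ω, (u i * v i + ∑ k, (u i * B i k) * f ω k) ∂P)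
            + ∫ ω, ((∑ j, (v i * A i j) * e ω j)
              + ∑ j, ∑ k, (A i j * B i k) * (e ω j * f ω k)) ∂P :=
          integral_add i1 (i2.add i3)
      _ = (∫ ω, (u i * v i + ∑ k, (u i * B i k) * f ω k) ∂P)
            + ((∫ ω, (∑ j, (v i * A i j) * e ω j) ∂P)
              + ∫ ω, (∑ j, ∑ k, (A i j * B i k) * (e ω j * f ω k)) ∂P) := by
          rw [integral_add i2 i3]
      _ = u i * v i + ∑ j, ∑ k, (A i j * B i k) * S j k := by
          rw [e4, e5, e6, zero_add]
  have htrace : Matrix.trace (Aᵀ * B * Sᵀ) = ∑ i, ∑ j, ∑ k, (A i j * B i k) * S j k := by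
    have h1 : Matrix.trace (Aᵀ * B * Sᵀ) = ∑ a, ∑ b, ∑ i, A i a * B i b * S a b := by
      simp only [Matrix.trace, Matrix.diag, Matrix.mul_apply, Matrix.transpose_apply,
        Finset.sum_mul]
    rw [h1,
      show (∑ a, ∑ b, ∑ i, A i a * B i b * S a b) = ∑ a, ∑ i, ∑ b, A i a * B i b * S a b
        from Finset.sum_congr rfl fun a _ => Finset.sum_comm,
      Finset.sum_comm]
  calc ∫ ω, (u + A.mulVec (e ω)) ⬝ᵥ (v + B.mulVec (f ω)) ∂P
      = ∫ ω, ∑ i, g i ω * h i ω ∂P :=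
        integral_congr_ae (Filter.Eventually.of_forall fun ω => hpt ω)
    _ = ∑ i, ∫ ω, g i ω * h i ω ∂P := integral_finset_sum _ fun i _ => hint i
    _ = ∑ i, (u i * v i + ∑ j, ∑ k, (A i j * B i k) * S j k) :=
        Finset.sum_congr rfl fun i _ => hterm i
    _ = u ⬝ᵥ v + Matrix.trace (Aᵀ * B * Sᵀ) := by
        rw [Finset.sum_add_distrib, htrace]
        rfl

end aux

/-- **Lemma 2, Eq. (proof_W3)** (conditional-on-`W` formula): with deterministic `W_m` and
mean-zero square-integrable errors with cross-covariances `Σ_{mm'} = E[ε_m ε_{m'}ᵀ]`,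
`E[R] = Tr{(I−H₃)(H₁−H)Σ₁₃} + Tr{(I−H₃)(H₂−H)Σ₂₃}
      + (W₃θ₃)ᵀ(I−H₃)(H₁−H)(W₁θ₁) + (W₃θ₃)ᵀ(I−H₃)(H₂−H)(W₂θ₂)`. -/
theorem expectation_R_deterministic_W {n p : ℕ}
    {Ω : Type*} [MeasurableSpace Ω] (P : Measure Ω) [IsProbabilityMeasure P]
    (X : Fin 3 → Matrix (Fin n) (Fin p) ℝ)
    (hXm : ∀ m, IsUnit ((X m)ᵀ * X m))
    (hX : IsUnit ((fromCols (X 0) (X 1))ᵀ * fromCols (X 0) (X 1)))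
    (β θ : Fin 3 → Fin p → ℝ)
    (W : Fin 3 → Matrix (Fin n) (Fin p) ℝ)
    (ε : Fin 3 → Ω → Fin n → ℝ)
    (Sig : Fin 3 → Fin 3 → Matrix (Fin n) (Fin n) ℝ)
    (hL2 : ∀ m i, MemLp (fun ω => ε m ω i) 2 P)
    (hmean : ∀ m i, ∫ ω, ε m ω i ∂P = 0)
    (hcov : ∀ m m' i j, ∫ ω, ε m ω i * ε m' ω j ∂P = Sig m m' i j) :
    let y : Fin 3 → Ω → Fin n → ℝ :=
      fun m ω => (X m).mulVec (β m) + (W m).mulVec (θ m) + ε m ω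
    let H := hatMat (fromCols (X 0) (X 1))
    let H₁ := hatMat (X 0)
    let H₂ := hatMat (X 1)
    let H₃ := hatMat (X 2)
    (∫ ω, (y 2 ω - H₃.mulVec (y 2 ω)) ⬝ᵥ
        ((H₁.mulVec (y 0 ω) + H₂.mulVec (y 1 ω)) - H.mulVec (y 0 ω + y 1 ω)) ∂P)
      = Matrix.trace ((1 - H₃) * (H₁ - H) * Sig 0 2)
        + Matrix.trace ((1 - H₃) * (H₂ - H) * Sig 1 2)
        + ((W 2).mulVec (θ 2)) ⬝ᵥ (((1 - H₃) * (H₁ - H)).mulVec ((W 0).mulVec (θ 0)))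
        + ((W 2).mulVec (θ 2)) ⬝ᵥ (((1 - H₃) * (H₂ - H)).mulVec ((W 1).mulVec (θ 1))) := by
  intro y H H₁ H₂ H₃
  -- hat matrix facts
  have hH3X : H₃ * X 2 = X 2 := hat_mul_self _ (hXm 2)
  have hH1X : H₁ * X 0 = X 0 := hat_mul_self _ (hXm 0)
  have hH2X : H₂ * X 1 = X 1 := hat_mul_self _ (hXm 1)
  have hHX : H * fromCols (X 0) (X 1) = fromCols (X 0) (X 1) := hat_mul_self _ hX
  have hHX0 : H * X 0 = X 0 := by
    have := hHX
    rw [Matrix.mul_fromCols] at this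
    exact ((Matrix.fromCols_inj.eq_iff).mp this).1
  have hHX1 : H * X 1 = X 1 := by
    have := hHX
    rw [Matrix.mul_fromCols] at this
    exact ((Matrix.fromCols_inj.eq_iff).mp this).2
  have hH3T : (1 - H₃)ᵀ = 1 - H₃ := by
    rw [Matrix.transpose_sub, Matrix.transpose_one, hat_transpose]
  -- abbreviations
  set w0 := (W 0).mulVec (θ 0)
  set w1 := (W 1).mulVec (θ 1)
  set w2 := (W 2).mulVec (θ 2)
  -- pointwise identities
  have hy2 : ∀ ω, y 2 ω - H₃.mulVec (y 2 ω)
      = (1 - H₃).mulVec w2 + (1 - H₃).mulVec (ε 2 ω) := by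
    intro ω
    show (X 2).mulVec (β 2) + w2 + ε 2 ω - H₃.mulVec ((X 2).mulVec (β 2) + w2 + ε 2 ω) = _
    rw [Matrix.mulVec_add, Matrix.mulVec_add, Matrix.mulVec_mulVec, hH3X,
      Matrix.sub_mulVec, Matrix.sub_mulVec, Matrix.one_mulVec, Matrix.one_mulVec]
    abel
  have hy01 : ∀ ω, (H₁.mulVec (y 0 ω) + H₂.mulVec (y 1 ω)) - H.mulVec (y 0 ω + y 1 ω)
      = ((H₁ - H).mulVec w0 + (H₁ - H).mulVec (ε 0 ω))
        + ((H₂ - H).mulVec w1 + (H₂ - H).mulVec (ε 1 ω)) := by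
    intro ω
    show H₁.mulVec ((X 0).mulVec (β 0) + w0 + ε 0 ω)
        + H₂.mulVec ((X 1).mulVec (β 1) + w1 + ε 1 ω)
        - H.mulVec (((X 0).mulVec (β 0) + w0 + ε 0 ω) + ((X 1).mulVec (β 1) + w1 + ε 1 ω)) = _
    simp only [Matrix.mulVec_add, Matrix.mulVec_mulVec, hH1X, hH2X, hHX0, hHX1,
      Matrix.sub_mulVec]
    abel
  -- apply key lemma twice
  have k1 := key (P := P) (1 - H₃) (H₁ - H) ((1 - H₃).mulVec w2) ((H₁ - H).mulVec w0)
    (ε 2) (ε 0) (Sig 2 0) (hL2 2) (hL2 0) (hmean 2) (hmean 0) (hcov 2 0)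
  have k2 := key (P := P) (1 - H₃) (H₂ - H) ((1 - H₃).mulVec w2) ((H₂ - H).mulVec w1)
    (ε 2) (ε 1) (Sig 2 1) (hL2 2) (hL2 1) (hmean 2) (hmean 1) (hcov 2 1)
  have hsplit : (∫ ω, (y 2 ω - H₃.mulVec (y 2 ω)) ⬝ᵥ
      ((H₁.mulVec (y 0 ω) + H₂.mulVec (y 1 ω)) - H.mulVec (y 0 ω + y 1 ω)) ∂P)
      = (∫ ω, ((1 - H₃).mulVec w2 + (1 - H₃).mulVec (ε 2 ω)) ⬝ᵥ
            ((H₁ - H).mulVec w0 + (H₁ - H).mulVec (ε 0 ω)) ∂P)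
        + ∫ ω, ((1 - H₃).mulVec w2 + (1 - H₃).mulVec (ε 2 ω)) ⬝ᵥ
            ((H₂ - H).mulVec w1 + (H₂ - H).mulVec (ε 1 ω)) ∂P := by
    rw [← integral_add k1.1 k2.1]
    refine integral_congr_ae (Filter.Eventually.of_forall fun ω => ?_)
    simp only [hy2, hy01, dotProduct_add]
  -- transpose facts for Sig
  have hSig02 : (Sig 2 0)ᵀ = Sig 0 2 := by
    ext i j
    rw [Matrix.transpose_apply, ← hcov 2 0 j i, ← hcov 0 2 i j]
    exact integral_congr_ae (Filter.Eventually.of_forall fun ω => mul_comm _ _)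
  have hSig12 : (Sig 2 1)ᵀ = Sig 1 2 := by
    ext i j
    rw [Matrix.transpose_apply, ← hcov 2 1 j i, ← hcov 1 2 i j]
    exact integral_congr_ae (Filter.Eventually.of_forall fun ω => mul_comm _ _)
  -- dot product of constants
  have hdot : ∀ (M : Matrix (Fin n) (Fin n) ℝ) (a : Fin n → ℝ),
      ((1 - H₃).mulVec w2) ⬝ᵥ (M.mulVec a) = w2 ⬝ᵥ (((1 - H₃) * M).mulVec a) := by
    intro M a
    rw [← Matrix.mulVec_mulVec, Matrix.dotProduct_mulVec w2, ← Matrix.mulVec_transpose, hH3T]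
  rw [hsplit, k1.2, k2.2, hH3T, hSig02, hSig12, hdot (H₁ - H) w0, hdot (H₂ - H) w1]
  ring
end
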